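/- Any complete set of n-qubit product rays contains exactly one all-north ray: for every n ≥ 1, every orthonormal basis of (ℂ²)^{⊗n} consisting of 2ⁿ product vectors contains exactly one all-north element. -/

import Mathlib

open scoped InnerProductSpace
open MeasureTheory

noncomputable section

abbrev Qubit : Type := EuclideanSpace ℂ (Fin 2)
abbrev NQubit (n : ℕ) : Type := EuclideanSpace ℂ (Fin n → Fin 2)

/-- The product vector `ψ₁ ⊗ ⋯ ⊗ ψₙ` in `(ℂ²)^{⊗n}`, modelled concretely as
`EuclideanSpace ℂ (Fin n → Fin 2)`; its inner products satisfy
`⟨tens ψ, tens χ⟩ = ∏ j, ⟨ψ j, χ j⟩`. -/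
noncomputable def tens {n : ℕ} (ψ : Fin n → Qubit) : NQubit n :=
  WithLp.toLp 2 (fun f => ∏ j, ψ j (f j))

/-- A vector of `(ℂ²)^{⊗n}` is a product vector if it is of the form `ψ₁ ⊗ ⋯ ⊗ ψₙ`. -/
def IsProduct {n : ℕ} (v : NQubit n) : Prop := ∃ ψ : Fin n → Qubit, v = tens ψ

/-- A finite set of vectors forming an orthonormal basis of `H`. -/
def IsONBasis {H : Type*} [NormedAddCommGroup H] [InnerProductSpace ℂ H]
    (B : Finset H) : Prop :=
  Orthonormal ℂ (fun v : B => (v : H)) ∧ Submodule.span ℂ (B : Set H) = ⊤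

/-- A KS-colouring of a set `S` of unit vectors: a `{0,1}`-valued map (modelled as a
predicate, `c v` meaning value `1`) such that every orthonormal basis contained in `S`
has exactly one element of value `1`, and no two mutually orthogonal elements of `S`
both have value `1`. -/
def IsKSColouring {H : Type*} [NormedAddCommGroup H] [InnerProductSpace ℂ H]
    (S : Set H) (c : H → Prop) : Prop :=
  (∀ B : Finset H, ↑B ⊆ S → IsONBasis B → ∃! v, v ∈ B ∧ c v) ∧
  (∀ ψ ∈ S, ∀ χ ∈ S, ⟪ψ, χ⟫_ℂ = 0 → ¬(c ψ ∧ c χ))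

/-- First coordinate of the Bloch vector of a qubit vector. -/
def blochX (ψ : Qubit) : ℝ := 2 * ((starRingEnd ℂ) (ψ 0) * ψ 1).re
/-- Second coordinate of the Bloch vector of a qubit vector. -/
def blochY (ψ : Qubit) : ℝ := 2 * ((starRingEnd ℂ) (ψ 0) * ψ 1).im
/-- Third coordinate of the Bloch vector of a qubit vector. -/
def blochZ (ψ : Qubit) : ℝ := Complex.normSq (ψ 0) - Complex.normSq (ψ 1)

/-- A qubit unit vector is north if its Bloch vector `(x,y,z)` satisfies `z > 0`, or
`z = 0 ∧ y < 0`, or `z = 0 ∧ y = 0 ∧ x > 0`. -/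
def IsNorth (ψ : Qubit) : Prop :=
  0 < blochZ ψ ∨ (blochZ ψ = 0 ∧ blochY ψ < 0) ∨
    (blochZ ψ = 0 ∧ blochY ψ = 0 ∧ 0 < blochX ψ)

/-- An `n`-qubit product vector is all-north if it factors as a product of north
qubit vectors. -/
def AllNorth {n : ℕ} (v : NQubit n) : Prop :=
  ∃ ψ : Fin n → Qubit, v = tens ψ ∧ ∀ j, IsNorth (ψ j)
set_option maxHeartbeats 1000000

private lemma inner_tens {n : ℕ} (ψ χ : Fin n → Qubit) :
    ⟪tens ψ, tens χ⟫_ℂ = ∏ j, ⟪ψ j, χ j⟫_ℂ := by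
  classical
  calc ⟪tens ψ, tens χ⟫_ℂ
      = ∑ f : Fin n → Fin 2, (starRingEnd ℂ) (∏ j, ψ j (f j)) * ∏ j, χ j (f j) := by
        simp [PiLp.inner_apply, RCLike.inner_apply', tens, mul_comm]
    _ = ∑ f : Fin n → Fin 2, ∏ j, (starRingEnd ℂ) (ψ j (f j)) * χ j (f j) := by
        simp [map_prod, Finset.prod_mul_distrib]
    _ = ∏ j, ∑ i, (starRingEnd ℂ) (ψ j i) * χ j i :=
        (Fintype.prod_sum (κ := fun _ : Fin n => Fin 2)
          (fun j i => (starRingEnd ℂ) (ψ j i) * χ j i)).symm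
    _ = ∏ j, ⟪ψ j, χ j⟫_ℂ := by
        simp [PiLp.inner_apply, RCLike.inner_apply', mul_comm]

private lemma tens_eq_zero {n : ℕ} {ψ : Fin n → Qubit} {j : Fin n} (hj : ψ j = 0) :
    tens ψ = 0 := by
  ext f
  show (∏ i, ψ i (f i)) = 0
  exact Finset.prod_eq_zero (Finset.mem_univ j) (by rw [hj]; rfl)

private lemma north_flip_real {X Y Z X' Y' Z' S T : ℝ} (hS : 0 < S) (hT : 0 < T)
    (hX : X' * S = -X * T) (hY : Y' * S = -Y * T) (hZ : Z' * S = -Z * T)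
    (hnz : 0 < X ^ 2 + Y ^ 2 + Z ^ 2) :
    (0 < Z ∨ (Z = 0 ∧ Y < 0) ∨ (Z = 0 ∧ Y = 0 ∧ 0 < X)) ↔
      ¬(0 < Z' ∨ (Z' = 0 ∧ Y' < 0) ∨ (Z' = 0 ∧ Y' = 0 ∧ 0 < X')) := by
  have zpos : 0 < Z → Z' < 0 := fun h => by nlinarith
  have zneg : Z < 0 → 0 < Z' := fun h => by nlinarith
  have zzero : Z = 0 → Z' = 0 := fun h => by
    have : Z' * S = 0 := by rw [hZ, h]; ring
    exact (mul_eq_zero.1 this).resolve_right (ne_of_gt hS)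
  have zzero' : Z' = 0 → Z = 0 := fun h => by
    have : Z * T = 0 := by nlinarith
    exact (mul_eq_zero.1 this).resolve_right (ne_of_gt hT)
  have ypos : 0 < Y → Y' < 0 := fun h => by nlinarith
  have yneg : Y < 0 → 0 < Y' := fun h => by nlinarith
  have yzero : Y = 0 → Y' = 0 := fun h => by
    have : Y' * S = 0 := by rw [hY, h]; ring
    exact (mul_eq_zero.1 this).resolve_right (ne_of_gt hS)
  have xpos : 0 < X → X' < 0 := fun h => by nlinarith
  have xneg : X < 0 → 0 < X' := fun h => by nlinarith
  constructor
  · rintro (hz | ⟨hz, hy⟩ | ⟨hz, hy, hx⟩) (hz' | ⟨hz', hy'⟩ | ⟨hz', hy', hx'⟩) <;>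
    first
      | (exact absurd hz' (not_lt.2 (le_of_lt (zpos hz))))
      | (exact absurd (zzero' hz') (ne_of_gt hz))
      | (exact absurd hy' (not_lt.2 (le_of_lt (yneg hy))))
      | (exact absurd (yzero hy) (ne_of_lt hy'))
      | (exact absurd hx' (not_lt.2 (le_of_lt (xpos hx))))
      | (nlinarith)
  · intro H
    rcases lt_trichotomy Z 0 with h | h | h
    · exact absurd (Or.inl (zneg h)) H
    · rcases lt_trichotomy Y 0 with h2 | h2 | h2
      · exact Or.inr (Or.inl ⟨h, h2⟩)
      · rcases lt_trichotomy X 0 with h3 | h3 | h3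
        · exact absurd (Or.inr (Or.inr ⟨zzero h, yzero h2, xneg h3⟩)) H
        · nlinarith
        · exact Or.inr (Or.inr ⟨h, h2, h3⟩)
      · exact absurd (Or.inr (Or.inl ⟨zzero h, ypos h2⟩)) H
    · exact Or.inl h

private lemma qubit_ne_zero_iff {ψ : Qubit} : ψ ≠ 0 ↔ (ψ 0 ≠ 0 ∨ ψ 1 ≠ 0) := by
  constructor
  · intro h
    by_contra hc
    push_neg at hc
    exact h (PiLp.ext fun i => by fin_cases i <;> simp [hc.1, hc.2])
  · rintro (h | h) rfl <;> simp at h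

private lemma normSq_sum_pos {ψ : Qubit} (h : ψ ≠ 0) :
    0 < Complex.normSq (ψ 0) + Complex.normSq (ψ 1) := by
  rcases qubit_ne_zero_iff.1 h with h0 | h0
  · have := Complex.normSq_pos.2 h0
    have := Complex.normSq_nonneg (ψ 1)
    linarith
  · have := Complex.normSq_pos.2 h0
    have := Complex.normSq_nonneg (ψ 0)
    linarith

private lemma north_antipodal {ψ χ : Qubit} (hψ : ψ ≠ 0) (hχ : χ ≠ 0)
    (h : ⟪ψ, χ⟫_ℂ = 0) : IsNorth ψ ↔ ¬ IsNorth χ := by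
  set a := ψ 0 with ha
  set b := ψ 1 with hb
  set c := χ 0 with hc
  set d := χ 1 with hd
  have h1 : (starRingEnd ℂ) a * c + (starRingEnd ℂ) b * d = 0 := by
    simpa [PiLp.inner_apply, RCLike.inner_apply', Fin.sum_univ_two, mul_comm] using h
  have h2 : a * (starRingEnd ℂ) c + b * (starRingEnd ℂ) d = 0 := by
    have := congrArg (starRingEnd ℂ) h1
    simpa using this
  set S : ℝ := Complex.normSq a + Complex.normSq b with hSdef
  set T : ℝ := Complex.normSq c + Complex.normSq d with hTdef
  have hS : 0 < S := normSq_sum_pos hψ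
  have hT : 0 < T := normSq_sum_pos hχ
  have HXY : (starRingEnd ℂ) c * d * (S : ℂ) = -((starRingEnd ℂ) a * b) * (T : ℂ) := by
    have eS : (S : ℂ) = (starRingEnd ℂ) a * a + (starRingEnd ℂ) b * b := by
      push_cast [hSdef]
      rw [← Complex.normSq_eq_conj_mul_self, ← Complex.normSq_eq_conj_mul_self]
    have eT : (T : ℂ) = (starRingEnd ℂ) c * c + (starRingEnd ℂ) d * d := by
      push_cast [hTdef]
      rw [← Complex.normSq_eq_conj_mul_self, ← Complex.normSq_eq_conj_mul_self]
    rw [eS, eT]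
    linear_combination ((starRingEnd ℂ) a * d) * h2 + (b * (starRingEnd ℂ) c) * h1
  have hX : blochX χ * S = -(blochX ψ) * T := by
    have := congrArg Complex.re HXY
    simp only [Complex.mul_re, Complex.ofReal_re, Complex.ofReal_im,
      Complex.neg_re, Complex.neg_im, mul_zero, sub_zero, neg_mul, neg_zero] at this
    simp only [blochX, Complex.mul_re, ← ha, ← hb, ← hc, ← hd]
    linarith
  have hY : blochY χ * S = -(blochY ψ) * T := by
    have := congrArg Complex.im HXY
    simp only [Complex.mul_im, Complex.ofReal_re, Complex.ofReal_im,
      Complex.neg_re, Complex.neg_im, mul_zero, add_zero, zero_add, neg_mul, neg_zero] at this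
    simp only [blochY, Complex.mul_im, ← ha, ← hb, ← hc, ← hd]
    linarith
  have hprodns : Complex.normSq a * Complex.normSq c = Complex.normSq b * Complex.normSq d := by
    have hac : (starRingEnd ℂ) a * c = -((starRingEnd ℂ) b * d) :=
      eq_neg_of_add_eq_zero_left h1
    have := congrArg Complex.normSq hac
    simpa [Complex.normSq_mul, Complex.normSq_conj, Complex.normSq_neg] using this
  have hZ : blochZ χ * S = -(blochZ ψ) * T := by
    simp only [blochZ, ← ha, ← hb, ← hc, ← hd, hSdef, hTdef]
    nlinarith [hprodns]
  have hnz : 0 < blochX ψ ^ 2 + blochY ψ ^ 2 + blochZ ψ ^ 2 := by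
    have key : (((starRingEnd ℂ) a * b).re) ^ 2 + (((starRingEnd ℂ) a * b).im) ^ 2
        = Complex.normSq a * Complex.normSq b := by
      have : Complex.normSq ((starRingEnd ℂ) a * b) = Complex.normSq a * Complex.normSq b := by
        simp [Complex.normSq_mul, Complex.normSq_conj]
      rw [← this, Complex.normSq_apply]; ring
    simp only [blochX, blochY, blochZ, ← ha, ← hb]
    nlinarith [key, hS, sq_nonneg (Complex.normSq a + Complex.normSq b)]
  exact north_flip_real hS hT hX hY hZ hnz

/-- for every `n ≥ 1`, every orthonormal basis of `(ℂ²)^{⊗n}` consisting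
of `2ⁿ` product vectors contains exactly one all-north element. -/
theorem n_qubit_product_basis_exactly_one_all_north
    (n : ℕ) (hn : 1 ≤ n) (B : Finset (NQubit n)) (hcard : B.card = 2 ^ n)
    (hB : IsONBasis B) (hprod : ∀ v ∈ B, IsProduct v) :
    ∃! v, v ∈ B ∧ AllNorth v := by
  classical
  obtain ⟨horth, -⟩ := hB
  have hfac : ∀ v : ↥B, ∃ ψ : Fin n → Qubit, (v : NQubit n) = tens ψ :=
    fun v => hprod v v.2
  choose f hf using hfac
  have hvne : ∀ v : ↥B, (v : NQubit n) ≠ 0 := fun v => horth.ne_zero v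
  have hfne : ∀ (v : ↥B) (j : Fin n), f v j ≠ 0 := by
    intro v j hj
    exact hvne v (by rw [hf v]; exact tens_eq_zero hj)
  have key : ∀ v w : ↥B, v ≠ w → ∃ j, ⟪f v j, f w j⟫_ℂ = 0 := by
    intro v w hvw
    have h0 : ⟪(v : NQubit n), (w : NQubit n)⟫_ℂ = 0 := horth.2 hvw
    rw [hf v, hf w, inner_tens] at h0
    obtain ⟨j, -, hj⟩ := Finset.prod_eq_zero_iff.1 h0
    exact ⟨j, hj⟩
  let t : ↥B → (Fin n → Bool) := fun v j => decide (IsNorth (f v j))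
  have tinj : Function.Injective t := by
    intro v w hvw
    by_contra hne
    obtain ⟨j, hj⟩ := key v w hne
    have hiff := north_antipodal (hfne v j) (hfne w j) hj
    have hj2 : IsNorth (f v j) ↔ IsNorth (f w j) := by
      have := congrFun hvw j
      simpa [t, decide_eq_decide] using this
    rw [hj2] at hiff
    exact iff_not_self hiff
  have hcards : Fintype.card ↥B = Fintype.card (Fin n → Bool) := by
    simp [Fintype.card_coe, hcard]
  have tbij : Function.Bijective t :=
    (Fintype.bijective_iff_injective_and_card t).2 ⟨tinj, hcards⟩
  obtain ⟨v, hv⟩ := tbij.2 (fun _ => true)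
  refine ⟨(v : NQubit n), ⟨v.2, f v, hf v, fun j => ?_⟩, ?_⟩
  · have := congrFun hv j
    simpa [t] using this
  · rintro w ⟨hwB, ψw, hw, hwn⟩
    by_contra hne
    have hne' : (⟨w, hwB⟩ : ↥B) ≠ v := fun hc => hne (congrArg Subtype.val hc)
    have h0 : ⟪w, (v : NQubit n)⟫_ℂ = 0 := horth.2 hne'
    rw [hw, hf v, inner_tens] at h0
    obtain ⟨j, -, hj⟩ := Finset.prod_eq_zero_iff.1 h0
    have hwne : ψw j ≠ 0 := by
      intro hz
      exact hvne ⟨w, hwB⟩ (by simpa using hw.trans (tens_eq_zero hz))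
    have hNv : IsNorth (f v j) := by
      have := congrFun hv j
      simpa [t] using this
    exact (north_antipodal hwne (hfne v j) hj).1 (hwn j) hNv

end
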